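/- arXiv:2310.14760 — 4 statements merged into one kernel-verified Lean document; each statement's English description precedes it below -/
import Mathlib

section
/- ω(n) = O(ln n / ln ln n), i.e. there exists a constant C such that for all n ≥ 16, ω(n) ≤ C · ln n / ln ln n. -/
lemma key (n : ℕ) (hn : 0 < n) (m : ℕ) (hm : 1 ≤ m) :
    m ^ (n.primeFactors.card - m) ≤ n := by
  set S := n.primeFactors with hS
  set T := S.filter (fun p => m ≤ p) with hT
  have h1 : (S.filter (fun p => ¬ m ≤ p)).card ≤ m := by
    have hsub : S.filter (fun p => ¬ m ≤ p) ⊆ Finset.range m := by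
      intro p hp
      simp only [Finset.mem_filter, not_le] at hp
      exact Finset.mem_range.mpr hp.2
    simpa using (Finset.card_le_card hsub).trans (by simp)
  have h2 : S.card ≤ T.card + m := by
    have h := Finset.card_filter_add_card_filter_not (s := S) (p := fun p => m ≤ p)
    rw [← hT] at h
    omega
  have h3 : S.card - m ≤ T.card := by omega
  calc m ^ (S.card - m) ≤ m ^ T.card := Nat.pow_le_pow_right hm h3
    _ ≤ ∏ p ∈ T, p := Finset.pow_card_le_prod _ _ _ (fun p hp => (Finset.mem_filter.mp hp).2)
    _ ≤ ∏ p ∈ S, p := Finset.prod_le_prod_of_subset_of_one_le'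
        (show T ⊆ S from hT ▸ Finset.filter_subset _ _)
        (fun p hp _ => (Nat.prime_of_mem_primeFactors hp).pos)
    _ ≤ n := Nat.le_of_dvd hn (Nat.prod_primeFactors_dvd n)

/-- `ω(n) = O(ln n / ln ln n)`. -/
theorem omega_bigO : ∃ C : ℝ, ∀ n : ℕ, 16 ≤ n →
    (n.primeFactors.card : ℝ) ≤ C * Real.log n / Real.log (Real.log n) := by
  refine ⟨9, fun n hn => ?_⟩
  have hn0 : 0 < n := by omega
  set k := n.primeFactors.card with hk
  set K : ℝ := (k : ℝ) with hK
  set L : ℝ := Real.log n with hL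
  set LL : ℝ := Real.log L with hLL
  have h16 : (16 : ℝ) ≤ (n : ℝ) := by exact_mod_cast hn
  have hL1 : 1 < L := by
    have he : Real.exp 1 < (n : ℝ) := lt_of_lt_of_le (by linarith [Real.exp_one_lt_d9]) h16
    calc (1:ℝ) = Real.log (Real.exp 1) := (Real.log_exp 1).symm
      _ < L := Real.log_lt_log (Real.exp_pos 1) he
  have hL0 : 0 < L := by linarith
  have hLL0 : 0 < LL := Real.log_pos hL1
  have hLLL : LL ≤ L := Real.log_le_self hL0.le
  rw [le_div_iff₀ hLL0]
  -- Goal: K * LL ≤ 9 * L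
  by_cases hk9 : k ≤ 9
  · have hK9 : K ≤ 9 := by rw [hK]; exact_mod_cast hk9
    have hK0 : 0 ≤ K := by positivity
    nlinarith
  · push_neg at hk9
    have hK10 : (10:ℝ) ≤ K := by rw [hK]; exact_mod_cast hk9
    have hs0 : 0 < Real.sqrt L := Real.sqrt_pos.mpr hL0
    have hsq : Real.sqrt L * Real.sqrt L = L := Real.mul_self_sqrt hL0.le
    by_cases hks : K ≤ Real.sqrt L
    · -- LL ≤ 2 √L, so K * LL ≤ √L * 2√L = 2L ≤ 9L
      have hlogs : Real.log (Real.sqrt L) = LL / 2 := by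
        rw [Real.log_sqrt hL0.le]
      have h1 : Real.log (Real.sqrt L) ≤ Real.sqrt L - 1 :=
        Real.log_le_sub_one_of_pos hs0
      have hLL2 : LL ≤ 2 * Real.sqrt L := by rw [hlogs] at h1; linarith
      nlinarith
    · push_neg at hks
      set m := k / 2 with hm
      have hm5 : 5 ≤ m := by omega
      have hkey := key n hn0 m (by omega)
      have hpowR : ((m : ℝ)) ^ (k - m) ≤ (n : ℝ) := by exact_mod_cast hkey
      have hA : ((k - m : ℕ) : ℝ) * Real.log m ≤ L := by
        have h := Real.log_le_log (pow_pos (by positivity) _) hpowR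
        rwa [Real.log_pow] at h
      -- (k - m) ≥ K/2 and m ≥ K/3
      have hkm2 : k ≤ 2 * (k - m) := by omega
      have hkm2R : K / 2 ≤ ((k - m : ℕ) : ℝ) := by
        have : (k : ℝ) ≤ 2 * ((k - m : ℕ) : ℝ) := by exact_mod_cast hkm2
        rw [hK]; linarith
      have hm3 : k ≤ 3 * m := by omega
      have hm3R : K / 3 ≤ (m : ℝ) := by
        have : (k : ℝ) ≤ 3 * (m : ℝ) := by exact_mod_cast hm3
        rw [hK]; linarith
      -- log (K/3) ≥ log K / 2
      have hK0 : (0:ℝ) < K := by linarith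
      have hlogdiv : Real.log (K / 3) = Real.log K - Real.log 3 := by
        rw [Real.log_div (by linarith) (by norm_num)]
      have hlog9 : Real.log 9 = 2 * Real.log 3 := by
        rw [show (9:ℝ) = 3 ^ 2 by norm_num, Real.log_pow]; push_cast; ring
      have hlog9K : Real.log 9 ≤ Real.log K := Real.log_le_log (by norm_num) (by linarith)
      have hlogK3 : Real.log K / 2 ≤ Real.log (K / 3) := by
        rw [hlogdiv]; linarith
      -- log K ≥ LL / 2
      have hlogs : Real.log (Real.sqrt L) = LL / 2 := by rw [Real.log_sqrt hL0.le]
      have hlogKLL : LL / 2 ≤ Real.log K := by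
        have := Real.log_le_log hs0 hks.le
        rwa [hlogs] at this
      -- combine
      have hlogm : Real.log (K / 3) ≤ Real.log m :=
        Real.log_le_log (by linarith) hm3R
      have hstep : K / 2 * Real.log (K / 3) ≤ ((k - m : ℕ) : ℝ) * Real.log m :=
        mul_le_mul hkm2R hlogm (by linarith [hlogKLL]) (by positivity)
      nlinarith [hstep, hA, hlogK3, hlogKLL, hLL0.le, hK0.le]
end

section
/- For every positive integer ν ≥ 1 and real N ≥ 2, ν · π_{ν+1}(N) ≤ Σ_{p ≤ √N} π_ν(N/p), where the sum is over primes p with p² ≤ N. -/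
open Finset

/-- `π_ν(N)`: the number of squarefree positive integers `n ≤ N` with exactly `ν`
distinct prime factors. -/
noncomputable def piNu (ν : ℕ) (N : ℝ) : ℕ :=
  ((Finset.Icc 1 ⌊N⌋₊).filter (fun n => Squarefree n ∧ n.primeFactors.card = ν)).card

/-- `ν · π_{ν+1}(N) ≤ Σ_{p² ≤ N} π_ν(N/p)`. -/
theorem nu_mul_piNu_succ_le (ν : ℕ) (hν : 1 ≤ ν) (N : ℝ) (hN : 2 ≤ N) :
    ν * piNu (ν + 1) N ≤
      ∑ p ∈ (Finset.range (⌊N⌋₊ + 1)).filter (fun p : ℕ => p.Prime ∧ ((p : ℝ)) ^ 2 ≤ N),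
        piNu ν (N / p) := by
  classical
  have hN0 : (0:ℝ) ≤ N := by linarith
  set M := ⌊N⌋₊ with hM
  set S := (Finset.Icc 1 M).filter
      (fun n => Squarefree n ∧ n.primeFactors.card = ν + 1) with hS
  set P := (Finset.range (M + 1)).filter
      (fun p : ℕ => p.Prime ∧ ((p : ℝ)) ^ 2 ≤ N) with hP
  -- Step A: every n ∈ S has at least ν prime factors p with p² ≤ n (and those lie in P)
  have hA : ∀ n ∈ S, ν ≤ (P.filter (fun p => p ∣ n ∧ p ^ 2 ≤ n)).card := by
    intro n hn
    simp only [hS, Finset.mem_filter, Finset.mem_Icc] at hn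
    obtain ⟨⟨hn1, hnM⟩, hsf, hcard⟩ := hn
    have hnN : (n : ℝ) ≤ N := le_trans (Nat.cast_le.mpr hnM) (Nat.floor_le hN0)
    set B := n.primeFactors.filter (fun p => p ^ 2 ≤ n) with hB
    have hBsub : B ⊆ P.filter (fun p => p ∣ n ∧ p ^ 2 ≤ n) := by
      intro p hp
      simp only [hB, hP, Finset.mem_filter, Nat.mem_primeFactors, Finset.mem_range] at hp ⊢
      obtain ⟨⟨hpp, hpd, _⟩, hp2⟩ := hp
      have hpn : p ≤ n := Nat.le_of_dvd (by omega) hpd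
      refine ⟨⟨by omega, hpp, ?_⟩, hpd, hp2⟩
      calc ((p:ℝ)) ^ 2 = ((p ^ 2 : ℕ) : ℝ) := by push_cast; ring
        _ ≤ (n : ℝ) := Nat.cast_le.mpr hp2
        _ ≤ N := hnN
    have hBsub' : B ⊆ n.primeFactors := Finset.filter_subset _ _
    have hcompl : (n.primeFactors \ B).card ≤ 1 := by
      by_contra h
      push_neg at h
      obtain ⟨p, hp, q, hq, hpq⟩ := Finset.one_lt_card.mp h
      simp only [hB, Finset.mem_sdiff, Finset.mem_filter, Nat.mem_primeFactors,
        not_and, not_le] at hp hq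
      obtain ⟨⟨hpp, hpd, _⟩, hp2⟩ := hp
      obtain ⟨⟨hqp, hqd, _⟩, hq2⟩ := hq
      have hp2' : n < p ^ 2 := hp2 ⟨hpp, hpd, by omega⟩
      have hq2' : n < q ^ 2 := hq2 ⟨hqp, hqd, by omega⟩
      have hcop : Nat.Coprime p q := (Nat.coprime_primes hpp hqp).mpr hpq
      have hdvd : p * q ∣ n := hcop.mul_dvd_of_dvd_of_dvd hpd hqd
      have hle : p * q ≤ n := Nat.le_of_dvd (by omega) hdvd
      have h4 : n * n < p ^ 2 * q ^ 2 := Nat.mul_lt_mul'' hp2' hq2'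
      have h5 : p * q * (p * q) ≤ n * n := Nat.mul_le_mul hle hle
      have h6 : p ^ 2 * q ^ 2 = p * q * (p * q) := by ring
      omega
    have hcardB : ν ≤ B.card := by
      have h1 : (n.primeFactors \ B).card = n.primeFactors.card - B.card :=
        Finset.card_sdiff_of_subset hBsub'
      have h2 : B.card ≤ n.primeFactors.card := Finset.card_le_card hBsub'
      omega
    exact le_trans hcardB (Finset.card_le_card hBsub)
  -- lower bound via sum over S
  have h1 : ν * piNu (ν + 1) N ≤ ∑ n ∈ S, (P.filter (fun p => p ∣ n ∧ p ^ 2 ≤ n)).card := by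
    have : ν * piNu (ν + 1) N = ∑ _n ∈ S, ν := by
      rw [Finset.sum_const, smul_eq_mul, mul_comm, piNu]
    rw [this]
    exact Finset.sum_le_sum hA
  -- swap the double count
  have h2 : ∑ n ∈ S, (P.filter (fun p => p ∣ n ∧ p ^ 2 ≤ n)).card
      = ∑ p ∈ P, (S.filter (fun n => p ∣ n ∧ p ^ 2 ≤ n)).card := by
    simp_rw [Finset.card_filter]
    exact Finset.sum_comm
  -- Step B: for each p ∈ P, the fiber injects into the set counted by piNu ν (N/p)
  have h3 : ∀ p ∈ P, (S.filter (fun n => p ∣ n ∧ p ^ 2 ≤ n)).card ≤ piNu ν (N / p) := by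
    intro p hp
    simp only [hP, Finset.mem_filter, Finset.mem_range] at hp
    obtain ⟨hpM, hpp, hpN⟩ := hp
    have hp0 : 0 < p := hpp.pos
    have hpR : (0:ℝ) < p := by exact_mod_cast hp0
    rw [piNu]
    apply Finset.card_le_card_of_injOn (fun n => n / p)
    · intro n hn
      simp only [hS, Finset.mem_coe, Finset.mem_filter, Finset.mem_Icc] at hn ⊢
      obtain ⟨⟨⟨hn1, hnM⟩, hsf, hcard⟩, hpd, hp2⟩ := hn
      obtain ⟨m, hm⟩ := hpd
      have hm0 : 0 < m := by
        rcases Nat.eq_zero_or_pos m with h | h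
        · subst h; simp at hm; omega
        · exact h
      have hdiv : n / p = m := by rw [hm]; exact Nat.mul_div_cancel_left m hp0
      rw [hdiv]
      have hpm : ¬ p ∣ m := by
        intro h
        have hpp2 : p * p ∣ n := by
          rw [hm]; exact mul_dvd_mul_left p h
        exact hpp.not_isUnit (hsf p hpp2)
      have hmd : m ∣ n := ⟨p, by rw [hm]; ring⟩
      have hsfm : Squarefree m := hsf.squarefree_of_dvd hmd
      have hnN : (n : ℝ) ≤ N := le_trans (Nat.cast_le.mpr hnM) (Nat.floor_le hN0)
      refine ⟨⟨hm0, ?_⟩, hsfm, ?_⟩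
      · apply Nat.le_floor
        rw [le_div_iff₀ hpR]
        calc (m:ℝ) * p = ((p * m : ℕ) : ℝ) := by push_cast; ring
          _ = (n : ℝ) := by rw [hm]
          _ ≤ N := hnN
      · have hpf : n.primeFactors = insert p m.primeFactors := by
          rw [hm, Nat.primeFactors_mul hp0.ne' hm0.ne', hpp.primeFactors]
          rfl
        have hpnot : p ∉ m.primeFactors := by
          simp only [Nat.mem_primeFactors]
          intro h
          exact hpm h.2.1
        have := hcard
        rw [hpf, Finset.card_insert_of_notMem hpnot] at this
        omega
    · intro a ha b hb hab
      simp only [Finset.mem_coe, Finset.mem_filter] at ha hb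
      have ha' : p * (a / p) = a := Nat.mul_div_cancel' ha.2.1 
      have hb' : p * (b / p) = b := Nat.mul_div_cancel' hb.2.1
      simp only at hab
      rw [← ha', ← hb', hab]
  calc ν * piNu (ν + 1) N ≤ ∑ n ∈ S, (P.filter (fun p => p ∣ n ∧ p ^ 2 ≤ n)).card := h1
    _ = ∑ p ∈ P, (S.filter (fun n => p ∣ n ∧ p ^ 2 ≤ n)).card := h2
    _ ≤ ∑ p ∈ P, piNu ν (N / p) := Finset.sum_le_sum h3
end

section
/- There exist absolute constants A₁, A₂ > 0 such that for all integers ν ≥ 0 and all reals N > 3, π_{ν+1}(N) < (A₁ N / ln N) · (ln ln N + A₂)^ν / ν!. -/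
open Finset


/-- primes up to n -/
def HRPf (n : ℕ) : Finset ℕ := (Finset.range (n+1)).filter Nat.Prime

lemma HR_theta_le (n : ℕ) : ∑ p ∈ HRPf n, Real.log p ≤ n * Real.log 4 := by
  have h1 : ∑ p ∈ HRPf n, Real.log p = Real.log (primorial n) := by
    rw [primorial, ← Real.log_prod]
    · push_cast; rfl
    · intro p hp
      exact_mod_cast (Nat.Prime.pos (Finset.mem_filter.1 hp).2).ne'
  rw [h1]
  calc Real.log (primorial n) ≤ Real.log ((4:ℝ)^n) := by
        apply Real.log_le_log (by exact_mod_cast primorial_pos n)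
        exact_mod_cast primorial_le_4_pow n
    _ = n * Real.log 4 := by rw [Real.log_pow]

lemma HR_cheb {x : ℝ} (hx : 2 ≤ x) : ((HRPf ⌊x⌋₊).card : ℝ) ≤ 7 * x / Real.log x := by
  have hx0 : (0:ℝ) < x := by linarith
  have hlx : 0 < Real.log x := Real.log_pos (by linarith)
  have hsx : (1:ℝ) ≤ Real.sqrt x := by
    rw [show (1:ℝ) = Real.sqrt 1 by simp]
    exact Real.sqrt_le_sqrt (by linarith)
  set s := HRPf ⌊x⌋₊ with hs
  set m := ⌊Real.sqrt x⌋₊ with hm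
  have hsplit := Finset.card_filter_add_card_filter_not (s := s)
      (p := fun p => p ≤ m)
  -- small primes
  have h1 : ((s.filter (fun p => p ≤ m)).card : ℝ) ≤ Real.sqrt x := by
    have hsub : s.filter (fun p => p ≤ m) ⊆ Finset.Icc 2 m := by
      intro p hp
      simp only [Finset.mem_filter, HRPf, hs] at hp
      exact Finset.mem_Icc.2 ⟨hp.1.2.two_le, hp.2⟩
    calc ((s.filter (fun p => p ≤ m)).card : ℝ) ≤ ((Finset.Icc 2 m).card : ℝ) := by
          exact_mod_cast Finset.card_le_card hsub
      _ ≤ m := by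
          rw [Nat.card_Icc]
          have : m + 1 - 2 ≤ m := by omega
          exact_mod_cast this
      _ ≤ Real.sqrt x := Nat.floor_le (Real.sqrt_nonneg x)
  -- large primes
  have h2 : ((s.filter (fun p => ¬ p ≤ m)).card : ℝ) * (Real.log x / 2) ≤ x * Real.log 4 := by
    have hterm : ∀ p ∈ s.filter (fun p => ¬ p ≤ m), Real.log x / 2 ≤ Real.log p := by
      intro p hp
      simp only [Finset.mem_filter, not_le, hs, HRPf, Finset.mem_range] at hp
      have hps : Real.sqrt x < p := (Nat.floor_lt (Real.sqrt_nonneg x)).1 hp.2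
      have : Real.log x / 2 = Real.log (Real.sqrt x) := (Real.log_sqrt hx0.le).symm
      rw [this]
      exact (Real.log_le_log (by linarith) hps.le)
    calc ((s.filter (fun p => ¬ p ≤ m)).card : ℝ) * (Real.log x / 2)
        ≤ ∑ p ∈ s.filter (fun p => ¬ p ≤ m), Real.log p := by
          rw [← nsmul_eq_mul]
          exact Finset.card_nsmul_le_sum _ _ _ hterm
      _ ≤ ∑ p ∈ s, Real.log p := by
          apply Finset.sum_le_sum_of_subset_of_nonneg (Finset.filter_subset _ _)
          intro p hp _
          simp only [hs, HRPf, Finset.mem_filter] at hp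
          exact Real.log_nonneg (by exact_mod_cast hp.2.one_lt.le)
      _ ≤ (⌊x⌋₊ : ℝ) * Real.log 4 := HR_theta_le _
      _ ≤ x * Real.log 4 := by
          apply mul_le_mul_of_nonneg_right (Nat.floor_le hx0.le)
          exact Real.log_nonneg (by norm_num)
  -- combine
  have hcard : ((s.card : ℝ)) ≤ Real.sqrt x + 2 * Real.log 4 * x / Real.log x := by
    have h2' : ((s.filter (fun p => ¬ p ≤ m)).card : ℝ) ≤ 2 * Real.log 4 * x / Real.log x := by
      rw [le_div_iff₀ hlx]
      nlinarith [h2]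
    have := hsplit
    have hc : ((s.card : ℝ)) = ((s.filter (fun p => p ≤ m)).card : ℝ)
        + ((s.filter (fun p => ¬ p ≤ m)).card : ℝ) := by exact_mod_cast this.symm
    rw [hc]; linarith
  have hsqrt : Real.sqrt x * Real.log x ≤ 2 * x := by
    have h3 : Real.log x = 2 * Real.log (Real.sqrt x) := by
      rw [Real.log_sqrt hx0.le]; ring
    have h4 : Real.log (Real.sqrt x) ≤ Real.sqrt x - 1 :=
      Real.log_le_sub_one_of_pos (by linarith)
    have h5 : Real.sqrt x * Real.sqrt x = x := Real.mul_self_sqrt hx0.le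
    nlinarith [Real.sqrt_nonneg x]
  have hl4 : Real.log 4 ≤ 1.4 := by
    rw [show (4:ℝ) = 2^2 by norm_num, Real.log_pow]
    push_cast
    nlinarith [Real.log_two_lt_d9]
  rw [le_div_iff₀ hlx]
  calc (s.card : ℝ) * Real.log x ≤ (Real.sqrt x + 2 * Real.log 4 * x / Real.log x) * Real.log x :=
        mul_le_mul_of_nonneg_right hcard hlx.le
    _ = Real.sqrt x * Real.log x + 2 * Real.log 4 * x := by field_simp
    _ ≤ 2 * x + 2 * 1.4 * x := by
        have : 2 * Real.log 4 * x ≤ 2 * 1.4 * x := by nlinarith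
        linarith
    _ ≤ 7 * x := by linarith
lemma HR_log4 : Real.log 4 ≤ 1.4 := by
  rw [show (4:ℝ) = 2^2 by norm_num, Real.log_pow]
  push_cast
  nlinarith [Real.log_two_lt_d9]

lemma HR_fact_factorization {n p : ℕ} (hp : p.Prime) (hpn : p ≤ n) :
    n / p ≤ (Nat.factorial n).factorization p := by
  haveI := Fact.mk hp
  rw [Nat.factorization_def _ hp, padicValNat_factorial (b := Nat.log p n + 1) (Nat.lt_succ_self _)]
  have h1 : (1:ℕ) ∈ Finset.Ico 1 (Nat.log p n + 1) := by
    simp only [Finset.mem_Ico]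
    have := Nat.log_pos hp.one_lt hpn
    omega
  calc n / p = n / p ^ 1 := by rw [pow_one]
    _ ≤ _ := Finset.single_le_sum (f := fun i => n / p ^ i) (fun i _ => Nat.zero_le _) h1

lemma HR_log_factorial (n : ℕ) :
    Real.log (Nat.factorial n) = ∑ p ∈ (Nat.factorial n).primeFactors, ((Nat.factorial n).factorization p : ℝ) * Real.log p := by
  conv_lhs => rw [← Nat.factorization_prod_pow_eq_self (Nat.factorial_ne_zero n)]
  rw [Finsupp.prod, Nat.cast_prod, Real.log_prod, Nat.support_factorization]
  · apply Finset.sum_congr rfl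
    intro p hp
    rw [Nat.cast_pow, Real.log_pow]
  · intro p hp
    rw [Nat.support_factorization] at hp
    have := (Nat.prime_of_mem_primeFactors hp).pos
    positivity

lemma HR_M1 (n : ℕ) (hn : 2 ≤ n) : ∑ p ∈ HRPf n, Real.log p / p ≤ Real.log n + 2 := by
  have hn0 : (0:ℝ) < n := by positivity
  have hlogp_nonneg : ∀ p ∈ HRPf n, (0:ℝ) ≤ Real.log p := by
    intro p hp
    simp only [HRPf, Finset.mem_filter] at hp
    exact Real.log_nonneg (by exact_mod_cast hp.2.one_lt.le)
  have key : ∑ p ∈ HRPf n, ((n:ℝ)/p) * Real.log p ≤ n * Real.log n + n * Real.log 4 := by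
    have step1 : ∑ p ∈ HRPf n, ((n:ℝ)/p) * Real.log p ≤
        ∑ p ∈ HRPf n, (((n/p : ℕ) : ℝ) + 1) * Real.log p := by
      apply Finset.sum_le_sum
      intro p hp
      apply mul_le_mul_of_nonneg_right _ (hlogp_nonneg p hp)
      simp only [HRPf, Finset.mem_filter] at hp
      have hp0 : (0:ℝ) < p := by exact_mod_cast hp.2.pos
      rw [div_le_iff₀ hp0]
      have hmod := Nat.div_add_mod n p
      have hlt : n % p < p := Nat.mod_lt _ hp.2.pos
      have : (n:ℝ) = p * (n/p : ℕ) + (n % p : ℕ) := by exact_mod_cast hmod.symm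
      rw [this]
      have : ((n % p : ℕ):ℝ) < p := by exact_mod_cast hlt
      nlinarith [Nat.cast_nonneg (α := ℝ) (n/p)]
    have step2 : ∑ p ∈ HRPf n, (((n/p : ℕ) : ℝ)) * Real.log p ≤ Real.log (Nat.factorial n) := by
      rw [HR_log_factorial]
      have t1 : ∑ p ∈ HRPf n, (((n/p : ℕ) : ℝ)) * Real.log p ≤
          ∑ p ∈ HRPf n, (((Nat.factorial n).factorization p : ℝ)) * Real.log p := by
        apply Finset.sum_le_sum
        intro p hp
        have hnn := hlogp_nonneg p hp
        simp only [HRPf, Finset.mem_filter, Finset.mem_range] at hp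
        have := HR_fact_factorization hp.2 (by omega : p ≤ n)
        apply mul_le_mul_of_nonneg_right _ hnn
        exact_mod_cast this
      refine t1.trans ?_
      apply Finset.sum_le_sum_of_subset_of_nonneg
      · intro p hp
        simp only [HRPf, Finset.mem_filter, Finset.mem_range] at hp
        exact Nat.mem_primeFactors.2 ⟨hp.2, Nat.dvd_factorial hp.2.pos (by omega),
          Nat.factorial_ne_zero n⟩
      · intro p hp _
        have hpp := Nat.prime_of_mem_primeFactors hp
        have := Real.log_nonneg (by exact_mod_cast hpp.one_lt.le : (1:ℝ) ≤ p)
        positivity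
    calc ∑ p ∈ HRPf n, ((n:ℝ)/p) * Real.log p
        ≤ ∑ p ∈ HRPf n, (((n/p : ℕ) : ℝ) + 1) * Real.log p := step1
      _ = ∑ p ∈ HRPf n, (((n/p : ℕ) : ℝ)) * Real.log p + ∑ p ∈ HRPf n, Real.log p := by
          rw [← Finset.sum_add_distrib]
          apply Finset.sum_congr rfl
          intro p _; ring
      _ ≤ Real.log (Nat.factorial n) + n * Real.log 4 := add_le_add step2 (HR_theta_le n)
      _ ≤ n * Real.log n + n * Real.log 4 := by
          have h1 : ((Nat.factorial n : ℕ):ℝ) ≤ (n:ℝ)^n := by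
            exact_mod_cast Nat.factorial_le_pow n
          have h2 := Real.log_le_log (by exact_mod_cast Nat.factorial_pos n) h1
          rw [Real.log_pow] at h2
          linarith
  have heq : ∑ p ∈ HRPf n, Real.log p / p = (1/n) * ∑ p ∈ HRPf n, ((n:ℝ)/p) * Real.log p := by
    rw [Finset.mul_sum]
    apply Finset.sum_congr rfl
    intro p hp
    field_simp
  rw [heq]
  have hle : (1/(n:ℝ)) * ∑ p ∈ HRPf n, ((n:ℝ)/p) * Real.log p ≤
      (1/(n:ℝ)) * (n * Real.log n + n * Real.log 4) := by
    apply mul_le_mul_of_nonneg_left key (by positivity)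
  refine hle.trans ?_
  rw [one_div, inv_mul_eq_div, div_le_iff₀ hn0]
  have hl4 : Real.log 4 ≤ 1.4 := HR_log4
  nlinarith [Real.log_nonneg (by exact_mod_cast Nat.one_le_iff_ne_zero.2 (by omega) : (1:ℝ) ≤ n)]
lemma HR_tele (f : ℕ → ℝ) (n : ℕ) (hn : 2 ≤ n) :
    ∑ k ∈ Finset.Ico 2 n, (f (k+1) - f k) = f n - f 2 := by
  induction n, hn using Nat.le_induction with
  | base => simp
  | succ n hn ih => rw [Finset.sum_Ico_succ_top hn, ih]; ring

lemma HR_T_nonneg (n : ℕ) : 0 ≤ ∑ p ∈ HRPf n, Real.log p / p := by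
  apply Finset.sum_nonneg
  intro p hp
  simp only [HRPf, Finset.mem_filter] at hp
  have h1 : (1:ℝ) ≤ p := by exact_mod_cast hp.2.one_lt.le
  have := Real.log_nonneg h1
  positivity

lemma HR_abel (n : ℕ) (hn : 2 ≤ n) :
    ∑ p ∈ HRPf n, (1:ℝ)/p = (∑ p ∈ HRPf n, Real.log p / p)/Real.log n
    + ∑ k ∈ Finset.Ico 2 n,
        (∑ p ∈ HRPf k, Real.log p / p) * (1/Real.log k - 1/Real.log (k+1)) := by
  induction n, hn using Nat.le_induction with
  | base =>
    have h2 : HRPf 2 = {2} := by decide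
    have hl : Real.log 2 ≠ 0 := ne_of_gt (Real.log_pos one_lt_two)
    rw [h2]
    simp only [Finset.sum_singleton, Finset.Ico_self, Finset.sum_empty, add_zero]
    push_cast
    field_simp
  | succ n hn ih =>
    have hn1 : (1:ℝ) < n := by exact_mod_cast hn
    have hla : Real.log n ≠ 0 := ne_of_gt (Real.log_pos hn1)
    have hlb : Real.log ((n:ℝ)+1) ≠ 0 := ne_of_gt (Real.log_pos (by linarith))
    have hfil : HRPf (n+1) = if Nat.Prime (n+1) then insert (n+1) (HRPf n) else HRPf n := by
      simp only [HRPf, Finset.range_add_one, Finset.filter_insert]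
    have hnot : (n+1) ∉ HRPf n := by
      simp [HRPf]
    rw [Finset.sum_Ico_succ_top (by omega : 2 ≤ n), hfil]
    have hE : (∑ k ∈ Finset.Ico 2 n,
        (∑ p ∈ HRPf k, Real.log p / p) * (1/Real.log k - 1/Real.log (k+1)))
        = ∑ p ∈ HRPf n, (1:ℝ)/p - (∑ p ∈ HRPf n, Real.log p / p)/Real.log n := by
      rw [ih]; ring
    rw [hE]
    by_cases hp : Nat.Prime (n+1)
    · simp only [if_pos hp]
      rw [Finset.sum_insert hnot, Finset.sum_insert hnot]
      push_cast
      field_simp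
      ring
    · simp only [if_neg hp]
      push_cast
      field_simp
      ring

lemma HR_M2 (n : ℕ) (hn : 2 ≤ n) :
    ∑ p ∈ HRPf n, (1:ℝ)/p ≤ Real.log (Real.log n) + 8 := by
  have hl2 : (0.6931471803 : ℝ) < Real.log 2 := Real.log_two_gt_d9
  have hn1 : (1:ℝ) < n := by exact_mod_cast hn
  have hln : 0 < Real.log n := Real.log_pos hn1
  have hl2' : Real.log 2 ≤ Real.log n := Real.log_le_log (by norm_num) (by exact_mod_cast hn)
  rw [HR_abel n hn]
  -- bound the boundary term
  have hT : ∑ p ∈ HRPf n, Real.log p / p ≤ Real.log n + 2 := HR_M1 n hn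
  have h1 : (∑ p ∈ HRPf n, Real.log p / p)/Real.log n ≤ 1 + 2 * (1/Real.log 2) := by
    rw [div_le_iff₀ hln]
    have h2 : (2:ℝ) ≤ 2 * (1/Real.log 2) * Real.log n := by
      have hd : 1 ≤ Real.log n / Real.log 2 := (one_le_div (by linarith)).2 hl2'
      calc (2:ℝ) = 2*1 := by ring
        _ ≤ 2 * (Real.log n / Real.log 2) := by linarith
        _ = 2 * (1/Real.log 2) * Real.log n := by ring
    nlinarith [mul_le_mul_of_nonneg_right (le_refl (1:ℝ)) hln.le]
  -- bound each term of the sum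
  set F : ℕ → ℝ := fun k => Real.log (Real.log k) with hF
  set G : ℕ → ℝ := fun k => -(1/Real.log k) with hG
  have hterm : ∀ k ∈ Finset.Ico 2 n,
      (∑ p ∈ HRPf k, Real.log p / p) * (1/Real.log k - 1/Real.log (k+1)) ≤
      ((F (k+1) - F k) + 2 * (G (k+1) - G k)) := by
    intro k hk
    simp only [hF, hG]
    push_cast
    rw [Finset.mem_Ico] at hk
    have hk1 : (1:ℝ) < k := by exact_mod_cast hk.1
    have hv : 0 < Real.log k := Real.log_pos hk1
    have hu : Real.log k < Real.log ((k:ℝ)+1) := by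
      apply Real.log_lt_log (by linarith)
      linarith
    have hu0 : 0 < Real.log ((k:ℝ)+1) := by linarith
    have hw : 0 ≤ 1/Real.log (k:ℕ) - 1/Real.log ((k:ℕ)+1) := by
      push_cast
      rw [sub_nonneg]
      apply div_le_div_of_nonneg_left (by norm_num) hv hu.le
    have step1 : (∑ p ∈ HRPf k, Real.log p / p) * (1/Real.log k - 1/Real.log (k+1)) ≤
        (Real.log k + 2) * (1/Real.log (k:ℕ) - 1/Real.log ((k:ℕ)+1)) := by
      push_cast
      apply mul_le_mul_of_nonneg_right (HR_M1 k hk.1) _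
      push_cast at hw ⊢
      exact hw
    refine step1.trans ?_
    push_cast
    have key : 1 - Real.log k / Real.log ((k:ℝ)+1) ≤
        Real.log (Real.log ((k:ℝ)+1)) - Real.log (Real.log k) := by
      have hq : 0 < Real.log k / Real.log ((k:ℝ)+1) := by positivity
      have hlog := Real.log_le_sub_one_of_pos hq
      rw [Real.log_div (ne_of_gt hv) (ne_of_gt hu0)] at hlog
      linarith
    have expand : (Real.log k + 2) * (1/Real.log (k:ℝ) - 1/Real.log ((k:ℝ)+1)) =
        (1 - Real.log k / Real.log ((k:ℝ)+1)) + 2 * (1/Real.log (k:ℝ) - 1/Real.log ((k:ℝ)+1)) := by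
      field_simp
    rw [expand]
    linarith
  have hsum : ∑ k ∈ Finset.Ico 2 n,
      (∑ p ∈ HRPf k, Real.log p / p) * (1/Real.log k - 1/Real.log (k+1)) ≤
      (Real.log (Real.log n) - Real.log (Real.log 2)) + 2 * ((1/Real.log 2) - (1/Real.log n)) := by
    calc ∑ k ∈ Finset.Ico 2 n,
        (∑ p ∈ HRPf k, Real.log p / p) * (1/Real.log k - 1/Real.log (k+1))
        ≤ ∑ k ∈ Finset.Ico 2 n, ((F (k+1) - F k) + 2 * (G (k+1) - G k)) :=
          Finset.sum_le_sum hterm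
      _ = (F n - F 2) + 2 * (G n - G 2) := by
          rw [Finset.sum_add_distrib, HR_tele F n hn, ← Finset.mul_sum, HR_tele G n hn]
      _ = (Real.log (Real.log n) - Real.log (Real.log 2)) + 2 * ((1/Real.log 2) - (1/Real.log n)) := by
          simp only [hF, hG]
          push_cast
          ring
  have hll2 : -Real.log (Real.log 2) ≤ 0.45 := by
    have h0 : (0:ℝ) < Real.log 2 := by linarith
    have : Real.log (1/Real.log 2) ≤ 1/Real.log 2 - 1 := Real.log_le_sub_one_of_pos (by positivity)
    rw [one_div, Real.log_inv] at this
    have h2 : 1/Real.log 2 ≤ 1.45 := by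
      rw [div_le_iff₀ h0]
      nlinarith
    rw [one_div] at h2
    linarith
  have hq1 : 1/Real.log 2 ≤ 1.45 := by
    rw [div_le_iff₀ (by linarith)]
    nlinarith
  have hq2 : 0 < 1/Real.log n := by positivity
  linarith [h1, hsum]

noncomputable def HRS (ν : ℕ) (N : ℝ) : Finset ℕ :=
  (Finset.Icc 1 ⌊N⌋₊).filter (fun n => Squarefree n ∧ n.primeFactors.card = ν)

noncomputable def HRPP (N : ℝ) : Finset ℕ :=
  (Finset.range (⌊N⌋₊+1)).filter (fun p => Nat.Prime p ∧ p*p ≤ ⌊N⌋₊)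

lemma HR_comb (k : ℕ) (hk : 1 ≤ k) (N : ℝ) (hN : 0 ≤ N) :
    k * (HRS (k+1) N).card ≤ ∑ p ∈ HRPP N, (HRS k (N/p)).card := by
  classical
  set S := HRS (k+1) N with hS
  -- for n ∈ S, the set of "small" prime divisors
  have hQ : ∀ n ∈ S, k ≤ (n.primeFactors.filter (fun p => p*p ≤ n)).card := by
    intro n hn
    simp only [hS, HRS, Finset.mem_filter, Finset.mem_Icc] at hn
    obtain ⟨⟨hn1, hnN⟩, hsf, hcard⟩ := hn
    have hne : n.primeFactors.Nonempty := by
      rw [← Finset.card_pos, hcard]; omega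
    set M := n.primeFactors.max' hne with hM
    have hsub : n.primeFactors.erase M ⊆ n.primeFactors.filter (fun p => p*p ≤ n) := by
      intro p hp
      have hpmem := Finset.mem_of_mem_erase hp
      have hpM : p ≠ M := Finset.ne_of_mem_erase hp
      have hplt : p < M := lt_of_le_of_ne (Finset.le_max' _ p hpmem) hpM
      have hpprime := Nat.prime_of_mem_primeFactors hpmem
      have hMprime := Nat.prime_of_mem_primeFactors (n.primeFactors.max'_mem hne)
      have hcop : Nat.Coprime p M := (Nat.coprime_primes hpprime hMprime).2 hpM
      have hdvd : p * M ∣ n := Nat.Coprime.mul_dvd_of_dvd_of_dvd hcop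
        (Nat.dvd_of_mem_primeFactors hpmem)
        (Nat.dvd_of_mem_primeFactors (n.primeFactors.max'_mem hne))
      have hle : p * M ≤ n := Nat.le_of_dvd (by omega) hdvd
      refine Finset.mem_filter.2 ⟨hpmem, ?_⟩
      have : p * p ≤ p * M := Nat.mul_le_mul_left p hplt.le
      omega
    calc k = (n.primeFactors.erase M).card := by
          rw [Finset.card_erase_of_mem (n.primeFactors.max'_mem hne), hcard]
          omega
      _ ≤ _ := Finset.card_le_card hsub
  -- double counting
  have hdouble : k * S.card ≤ ∑ n ∈ S, (n.primeFactors.filter (fun p => p*p ≤ n)).card := by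
    have := Finset.card_nsmul_le_sum S _ k hQ
    simpa [mul_comm] using this
  refine hdouble.trans ?_
  -- swap to sum over primes
  have hQeq : ∀ n ∈ S, n.primeFactors.filter (fun p => p*p ≤ n)
      = (HRPP N).filter (fun p => p ∣ n ∧ p*p ≤ n) := by
    intro n hn
    simp only [hS, HRS, Finset.mem_filter, Finset.mem_Icc] at hn
    obtain ⟨⟨hn1, hnN⟩, hsf, hcard⟩ := hn
    ext p
    simp only [Finset.mem_filter, HRPP, Finset.mem_range, Nat.mem_primeFactors]
    constructor
    · rintro ⟨⟨hp, hpn, hn0⟩, hpp⟩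
      have h1 : p ≤ p * p := Nat.le_mul_of_pos_left p hp.pos
      exact ⟨⟨by omega, hp, by omega⟩, hpn, hpp⟩
    · rintro ⟨⟨hr, hp, hppN⟩, hpn, hpp⟩
      exact ⟨⟨hp, hpn, by omega⟩, hpp⟩
  have hswap : ∑ n ∈ S, (n.primeFactors.filter (fun p => p*p ≤ n)).card
      = ∑ p ∈ HRPP N, (S.filter (fun n => p ∣ n ∧ p*p ≤ n)).card := by
    calc ∑ n ∈ S, (n.primeFactors.filter (fun p => p*p ≤ n)).card
        = ∑ n ∈ S, ∑ p ∈ HRPP N, (if p ∣ n ∧ p*p ≤ n then 1 else 0) := by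
          apply Finset.sum_congr rfl
          intro n hn
          rw [hQeq n hn, Finset.card_filter]
      _ = ∑ p ∈ HRPP N, ∑ n ∈ S, (if p ∣ n ∧ p*p ≤ n then 1 else 0) := Finset.sum_comm
      _ = ∑ p ∈ HRPP N, (S.filter (fun n => p ∣ n ∧ p*p ≤ n)).card := by
          apply Finset.sum_congr rfl
          intro p _
          rw [Finset.card_filter]
  rw [hswap]
  apply Finset.sum_le_sum
  intro p hp
  simp only [HRPP, Finset.mem_filter, Finset.mem_range] at hp
  obtain ⟨hrange, hpr, hppN⟩ := hp
  have hp0 : 0 < p := hpr.pos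
  apply Finset.card_le_card_of_injOn (fun n => n / p)
  · intro n hn
    simp only [Finset.mem_coe, Finset.mem_filter] at hn ⊢
    obtain ⟨hnS, hpn, hppn⟩ := hn
    simp only [hS, HRS, Finset.mem_filter, Finset.mem_Icc] at hnS
    obtain ⟨⟨hn1, hnN⟩, hsf, hcard⟩ := hnS
    have hn0 : n ≠ 0 := by omega
    set m := n / p with hm
    have hnm : n = p * m := (Nat.mul_div_cancel' hpn).symm
    have hm0 : m ≠ 0 := by
      intro h; rw [h, mul_zero] at hnm; omega
    have hpm : ¬ p ∣ m := by
      intro hdvd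
      have : p * p ∣ n := by
        rw [hnm]; exact mul_dvd_mul_left p hdvd
      exact hpr.prime.not_unit (hsf p this)
    simp only [HRS, Finset.mem_filter, Finset.mem_Icc]
    refine ⟨⟨Nat.pos_of_ne_zero hm0, ?_⟩, ?_, ?_⟩
    · -- m ≤ ⌊N/p⌋₊
      apply Nat.le_floor
      have h1 : ((m:ℕ):ℝ) ≤ (n:ℝ)/p := by
        rw [hnm]
        push_cast
        rw [mul_comm, mul_div_assoc, div_self (by exact_mod_cast hp0.ne'), mul_one]
      have h2 : (n:ℝ) ≤ N := le_trans (by exact_mod_cast hnN) (Nat.floor_le hN)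
      have hp0' : (0:ℝ) < p := by exact_mod_cast hp0
      have h3 : (n:ℝ)/p ≤ N/p := by gcongr
      exact h1.trans h3
    · exact hsf.squarefree_of_dvd ⟨p, by rw [hnm, mul_comm]⟩
    · -- card primeFactors m = k
      have hcop : Nat.Coprime p m := (Nat.Prime.coprime_iff_not_dvd hpr).2 hpm
      have hfac : n.primeFactors = {p} ∪ m.primeFactors := by
        rw [hnm, Nat.primeFactors_mul (by omega) hm0, Nat.Prime.primeFactors hpr]
      have hpnotm : p ∉ m.primeFactors := fun hmem =>
        hpm (Nat.dvd_of_mem_primeFactors hmem)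
      have : n.primeFactors.card = 1 + m.primeFactors.card := by
        rw [hfac, Finset.card_union_of_disjoint (by simpa using hpnotm)]
        rfl
      omega
  · intro a ha b hb hab
    simp only [Finset.coe_filter, Set.mem_setOf_eq] at ha hb
    have h1 : a = p * (a / p) := (Nat.mul_div_cancel' ha.2.1).symm
    have h2 : b = p * (b / p) := (Nat.mul_div_cancel' hb.2.1).symm
    have hab' : a / p = b / p := hab
    calc a = p * (a/p) := h1
      _ = p * (b/p) := by rw [hab']
      _ = b := h2.symm


lemma HRS_one (N : ℝ) : HRS 1 N = HRPf ⌊N⌋₊ := by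
  ext n
  simp only [HRS, HRPf, Finset.mem_filter, Finset.mem_Icc, Finset.mem_range]
  constructor
  · rintro ⟨⟨h1, h2⟩, hsf, hcard⟩
    obtain ⟨q, hq⟩ := Finset.card_eq_one.1 hcard
    have hqn : q ∈ n.primeFactors := hq ▸ Finset.mem_singleton_self q
    have := Nat.prod_primeFactors_of_squarefree hsf
    rw [hq, Finset.prod_singleton] at this
    subst this
    exact ⟨by omega, Nat.prime_of_mem_primeFactors hqn⟩
  · rintro ⟨h1, hp⟩
    exact ⟨⟨hp.one_lt.le, by omega⟩, hp.squarefree, by rw [Nat.Prime.primeFactors hp]; rfl⟩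

set_option maxHeartbeats 2000000 in
lemma HR_main : ∀ ν : ℕ, ∀ N : ℝ, 3 < N →
    ((HRS (ν+1) N).card : ℝ) <
      8 * N / Real.log N * (Real.log (Real.log N) + 13)^ν / (Nat.factorial ν) := by
  have he3 : Real.exp 1 < 3 := by
    have := Real.exp_one_lt_d9
    linarith
  intro ν
  induction ν with
  | zero =>
    intro N hN3
    have hN0 : (0:ℝ) < N := by linarith
    have hL1 : 1 < Real.log N := by
      rw [← Real.exp_lt_exp (x := 1), Real.exp_log hN0] at *
      · exact lt_trans he3 hN3
    have hL0 : 0 < Real.log N := by linarith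
    rw [HRS_one]
    calc ((HRPf ⌊N⌋₊).card : ℝ) ≤ 7 * N / Real.log N := HR_cheb (by linarith)
      _ < 8 * N / Real.log N := by
          rw [div_lt_div_iff₀ hL0 hL0]
          nlinarith
      _ = 8 * N / Real.log N * (Real.log (Real.log N) + 13)^0 / (Nat.factorial 0) := by
          norm_num
  | succ ν ih =>
    intro N hN3
    have hN0 : (0:ℝ) < N := by linarith
    have hL1 : 1 < Real.log N := by
      have : Real.exp 1 < N := lt_trans he3 hN3
      calc (1:ℝ) = Real.log (Real.exp 1) := (Real.log_exp 1).symm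
        _ < Real.log N := Real.log_lt_log (Real.exp_pos 1) this
    have hL0 : 0 < Real.log N := by linarith
    set L := Real.log N with hLdef
    set LL := Real.log L with hLLdef
    have hLL0 : 0 < LL := Real.log_pos hL1
    have hfν : (0:ℝ) < (Nat.factorial ν : ℝ) := by exact_mod_cast Nat.factorial_pos ν
    have hfν1 : (0:ℝ) < (Nat.factorial (ν+1) : ℝ) := by exact_mod_cast Nat.factorial_pos (ν+1)
    have hpow0 : (0:ℝ) < (LL + 13)^(ν+1) := by positivity
    have hRpos : 0 < 8 * N / L * (LL + 13)^(ν+1) / (Nat.factorial (ν+1) : ℝ) := by positivity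
    by_cases h0 : (HRS (ν+1+1) N).card = 0
    · rw [h0]; exact_mod_cast hRpos
    rcases le_or_gt N 14 with hN14 | hN14
    · -- small N
      have hfloor : ⌊N⌋₊ ≤ 14 := by
        have : (⌊N⌋₊:ℝ) ≤ N := Nat.floor_le hN0.le
        exact_mod_cast this.trans hN14
      rcases Nat.lt_or_ge ν 2 with hν2 | hν2
      · -- ν ≤ 1 : trivial count bound
        have hcount : ((HRS (ν+1+1) N).card : ℝ) ≤ N := by
          calc ((HRS (ν+1+1) N).card : ℝ) ≤ ((Finset.Icc 1 ⌊N⌋₊).card : ℝ) := by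
                exact_mod_cast Finset.card_le_card (Finset.filter_subset _ _)
            _ = (⌊N⌋₊ : ℝ) := by rw [Nat.card_Icc]; norm_num
            _ ≤ N := Nat.floor_le hN0.le
        have hL52 : L < 52 := by
          have := Real.log_le_sub_one_of_pos hN0
          linarith
        have h13 : (13:ℝ) ≤ LL + 13 := by linarith
        refine hcount.trans_lt ?_
        interval_cases ν
        · have : 8 * N / L * (LL + 13)^(0+1) / (Nat.factorial (0+1) : ℝ)
              = 8 * N * (LL+13) / L := by
            simp [Nat.factorial]
            ring
          rw [this, lt_div_iff₀ hL0]
          nlinarith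
        · have : 8 * N / L * (LL + 13)^(1+1) / (Nat.factorial (1+1) : ℝ)
              = 8 * N * ((LL+13)*(LL+13)) / (2*L) := by
            simp [Nat.factorial]
            ring
          rw [this, lt_div_iff₀ (by linarith)]
          nlinarith
      · -- ν ≥ 2: the set is empty, contradiction with h0
        exfalso
        apply h0
        rw [Finset.card_eq_zero]
        by_contra hne
        obtain ⟨n, hn⟩ := Finset.nonempty_of_ne_empty hne
        simp only [HRS, Finset.mem_filter, Finset.mem_Icc] at hn
        obtain ⟨⟨hn1, hnN⟩, hsf, hcard⟩ := hn
        have h2 : 2^(ν+2) ≤ ∏ p ∈ n.primeFactors, p := by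
          have := Finset.pow_card_le_prod n.primeFactors (fun p => p) 2
            (fun p hp => (Nat.prime_of_mem_primeFactors hp).two_le)
          rw [hcard] at this
          simpa using this
        have hprod : ∏ p ∈ n.primeFactors, p = n := Nat.prod_primeFactors_of_squarefree hsf
        have h16 : 16 ≤ 2^(ν+2) := by
          calc (16:ℕ) = 2^4 := by norm_num
            _ ≤ 2^(ν+2) := Nat.pow_le_pow_right (by norm_num) (by omega)
        omega
    · -- main case N > 14
      have hL2 : 2 < L := by
        have he2 : Real.exp 2 < 14 := by
          have h1 := Real.exp_one_lt_d9
          have h2 : Real.exp 2 = Real.exp 1 * Real.exp 1 := by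
            rw [← Real.exp_add]; norm_num
          nlinarith [Real.exp_pos 1]
        calc (2:ℝ) = Real.log (Real.exp 2) := (Real.log_exp 2).symm
          _ < Real.log N := Real.log_lt_log (Real.exp_pos 2) (by linarith)
      have hsq : Real.sqrt N ^ 2 = N := Real.sq_sqrt hN0.le
      have hsnn := Real.sqrt_nonneg N
      have hs3 : 3 < Real.sqrt N := by nlinarith
      have hlogs : Real.log (Real.sqrt N) = L / 2 := Real.log_sqrt hN0.le
      have hfloorN : (14:ℕ) ≤ ⌊N⌋₊ := Nat.le_floor (by push_cast; linarith)
      have hfloorS : (2:ℕ) ≤ ⌊Real.sqrt N⌋₊ := Nat.le_floor (by push_cast; linarith)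
      have hbase : (0:ℝ) ≤ LL + 13 := by linarith
      have hCpos : 0 < 8*N*(LL+13)^ν / ((Nat.factorial ν : ℝ) * L) := by
        apply div_pos _ (by positivity)
        apply mul_pos (by positivity) (pow_pos (by linarith) ν)
      set C := 8*N*(LL+13)^ν / ((Nat.factorial ν : ℝ) * L) with hC
      -- facts about p ∈ HRPP N
      have hPPfacts : ∀ p ∈ HRPP N, Nat.Prime p ∧ (p:ℝ) ≤ Real.sqrt N := by
        intro p hp
        simp only [HRPP, Finset.mem_filter, Finset.mem_range] at hp
        obtain ⟨hr, hpr, hpp⟩ := hp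
        refine ⟨hpr, ?_⟩
        have hp0 : (0:ℝ) < p := by exact_mod_cast hpr.pos
        have hpsq : (p:ℝ)^2 ≤ N := by
          have h1 : ((p*p : ℕ):ℝ) ≤ (⌊N⌋₊:ℝ) := by exact_mod_cast hpp
          have h2 : (⌊N⌋₊:ℝ) ≤ N := Nat.floor_le hN0.le
          push_cast at h1
          nlinarith
        have : (p:ℝ) = Real.sqrt ((p:ℝ)^2) := (Real.sqrt_sq hp0.le).symm
        rw [this]
        exact Real.sqrt_le_sqrt hpsq
      -- per-prime bound
      have hper : ∀ p ∈ HRPP N, ((HRS (ν+1) (N/p)).card : ℝ) <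
          C * ((1/(p:ℝ)) * (1 + 2*Real.log p / L)) := by
        intro p hp
        obtain ⟨hpr, hpsqrt⟩ := hPPfacts p hp
        have hp2 : (2:ℝ) ≤ p := by exact_mod_cast hpr.two_le
        have hp0 : (0:ℝ) < p := by linarith
        have hlogp : Real.log p ≤ L/2 := by
          calc Real.log p ≤ Real.log (Real.sqrt N) := Real.log_le_log hp0 hpsqrt
            _ = L/2 := hlogs
        have hlogp0 : 0 < Real.log p := Real.log_pos (by linarith)
        have hNp3 : 3 < N / p := by
          calc (3:ℝ) < Real.sqrt N := hs3
            _ = N / Real.sqrt N := (Real.div_sqrt).symm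
            _ ≤ N / p := div_le_div_of_nonneg_left hN0.le hp0 hpsqrt
        have hNppos : (0:ℝ) < N / p := by positivity
        have ihp := ih (N/p) hNp3
        have hlogdiv : Real.log (N/p) = L - Real.log p := by
          rw [hLdef]
          exact Real.log_div hN0.ne' hp0.ne'
        have hLppos : 0 < L - Real.log p := by linarith
        have hLNp1 : 1 < Real.log (N/p) := by
          calc (1:ℝ) = Real.log (Real.exp 1) := (Real.log_exp 1).symm
            _ < Real.log (N/p) := Real.log_lt_log (Real.exp_pos 1) (by linarith)
        have hLLp : Real.log (Real.log (N/p)) ≤ LL := by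
          rw [hLLdef]
          apply Real.log_le_log (by linarith)
          rw [hlogdiv]
          linarith
        have hLLppos : 0 < Real.log (Real.log (N/p)) := Real.log_pos hLNp1
        have hkeym : L ≤ (1 + 2*Real.log p/L) * (L - Real.log p) := by
          have expand : (1 + 2*Real.log p/L) * (L - Real.log p)
              = L + Real.log p - 2*(Real.log p)^2/L := by field_simp; ring
          rw [expand]
          have : 2*(Real.log p)^2/L ≤ Real.log p := by
            rw [div_le_iff₀ hL0]; nlinarith
          linarith
        have hkey : 1/(L - Real.log p) ≤ (1 + 2*Real.log p/L)/L := by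
          rw [div_le_div_iff₀ hLppos hL0]
          linarith
        have hnonneg : (0:ℝ) ≤ 8 * (N/p) * (LL+13)^ν / (Nat.factorial ν) :=
          div_nonneg (mul_nonneg (by positivity) (pow_nonneg hbase ν)) hfν.le
        calc ((HRS (ν+1) (N/p)).card : ℝ)
            < 8 * (N/p) / Real.log (N/p) * (Real.log (Real.log (N/p)) + 13)^ν
              / (Nat.factorial ν) := ihp
          _ ≤ 8 * (N/p) / Real.log (N/p) * (LL + 13)^ν / (Nat.factorial ν) := by
              have hd0 : 0 < Real.log (N/p) := by linarith
              gcongr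
              all_goals first
                | exact le_of_lt (by positivity)
                | linarith
          _ = (8 * (N/p) * (LL+13)^ν / (Nat.factorial ν)) * (1/(L - Real.log p)) := by
              rw [hlogdiv]; ring
          _ ≤ (8 * (N/p) * (LL+13)^ν / (Nat.factorial ν)) * ((1 + 2*Real.log p/L)/L) :=
              mul_le_mul_of_nonneg_left hkey hnonneg
          _ = C * ((1/(p:ℝ)) * (1 + 2*Real.log p / L)) := by
              rw [hC]
              field_simp
      -- sum bounds
      have hsubN : HRPP N ⊆ HRPf ⌊N⌋₊ := by
        intro p hp
        simp only [HRPP, HRPf, Finset.mem_filter, Finset.mem_range] at *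
        exact ⟨hp.1, hp.2.1⟩
      have hsubS : HRPP N ⊆ HRPf ⌊Real.sqrt N⌋₊ := by
        intro p hp
        obtain ⟨hpr, hpsqrt⟩ := hPPfacts p hp
        simp only [HRPf, Finset.mem_filter, Finset.mem_range]
        have := Nat.le_floor hpsqrt
        exact ⟨by omega, hpr⟩
      have hlogfloorN : Real.log (⌊N⌋₊:ℝ) ≤ L := by
        rw [hLdef]
        apply Real.log_le_log _ (Nat.floor_le hN0.le)
        have : (14:ℝ) ≤ (⌊N⌋₊:ℝ) := by exact_mod_cast hfloorN
        linarith
      have hsum1 : ∑ p ∈ HRPP N, (1:ℝ)/p ≤ LL + 8 := by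
        calc ∑ p ∈ HRPP N, (1:ℝ)/p ≤ ∑ p ∈ HRPf ⌊N⌋₊, (1:ℝ)/p :=
              Finset.sum_le_sum_of_subset_of_nonneg hsubN (fun p _ _ => by positivity)
          _ ≤ Real.log (Real.log (⌊N⌋₊:ℝ)) + 8 := HR_M2 ⌊N⌋₊ (by omega)
          _ ≤ LL + 8 := by
              have h1 : (14:ℝ) ≤ (⌊N⌋₊:ℝ) := by exact_mod_cast hfloorN
              have h3 : 0 < Real.log (⌊N⌋₊:ℝ) := Real.log_pos (by linarith)
              have h4 : Real.log (Real.log (⌊N⌋₊:ℝ)) ≤ Real.log L :=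
                Real.log_le_log h3 hlogfloorN
              rw [hLLdef]
              linarith
      have hsum2 : ∑ p ∈ HRPP N, Real.log p/p ≤ L/2 + 2 := by
        calc ∑ p ∈ HRPP N, Real.log p/p ≤ ∑ p ∈ HRPf ⌊Real.sqrt N⌋₊, Real.log p/p := by
              apply Finset.sum_le_sum_of_subset_of_nonneg hsubS
              intro p hp _
              simp only [HRPf, Finset.mem_filter, Finset.mem_range] at hp
              have h1 : (1:ℝ) ≤ p := by exact_mod_cast hp.2.one_lt.le
              have := Real.log_nonneg h1
              positivity
          _ ≤ Real.log (⌊Real.sqrt N⌋₊:ℝ) + 2 := HR_M1 _ hfloorS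
          _ ≤ L/2 + 2 := by
              have h2 : Real.log (⌊Real.sqrt N⌋₊:ℝ) ≤ Real.log (Real.sqrt N) := by
                apply Real.log_le_log _ (Nat.floor_le hsnn)
                have : (2:ℝ) ≤ (⌊Real.sqrt N⌋₊:ℝ) := by exact_mod_cast hfloorS
                linarith
              rw [hlogs] at h2
              linarith
      have hsumW : ∑ p ∈ HRPP N, (1/(p:ℝ))*(1+2*Real.log p/L) ≤ LL + 13 := by
        have hterm : ∀ p ∈ HRPP N, (1/(p:ℝ))*(1+2*Real.log p/L)
            = 1/(p:ℝ) + (2/L)*(Real.log p/p) := by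
          intro p hp
          ring
        rw [Finset.sum_congr rfl hterm, Finset.sum_add_distrib, ← Finset.mul_sum]
        have h4L : (2/L)*(L/2+2) = 1 + 4/L := by field_simp; ring
        have hb : (2/L) * (∑ p ∈ HRPP N, Real.log p/p) ≤ (2/L)*(L/2+2) :=
          mul_le_mul_of_nonneg_left hsum2 (by positivity)
        have h4 : 4/L ≤ 4 := by
          rw [div_le_iff₀ hL0]; nlinarith
        linarith
      -- combine everything
      have hcomb := HR_comb (ν+1) (by omega) N hN0.le
      have hcombR : ((ν:ℝ)+1) * ((HRS (ν+1+1) N).card : ℝ)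
          ≤ ∑ p ∈ HRPP N, ((HRS (ν+1) (N/p)).card : ℝ) := by
        push_cast
        exact_mod_cast hcomb
      have hne : (HRPP N).Nonempty := by
        refine ⟨2, ?_⟩
        simp only [HRPP, Finset.mem_filter, Finset.mem_range]
        refine ⟨by omega, by norm_num, by omega⟩
      have hstrict : ∑ p ∈ HRPP N, ((HRS (ν+1) (N/p)).card : ℝ)
          < ∑ p ∈ HRPP N, C * ((1/(p:ℝ))*(1+2*Real.log p/L)) :=
        Finset.sum_lt_sum_of_nonempty hne hper
      have htot : ((ν:ℝ)+1) * ((HRS (ν+1+1) N).card : ℝ) < C * (LL+13) := by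
        calc ((ν:ℝ)+1) * ((HRS (ν+1+1) N).card : ℝ)
            ≤ ∑ p ∈ HRPP N, ((HRS (ν+1) (N/p)).card : ℝ) := hcombR
          _ < ∑ p ∈ HRPP N, C * ((1/(p:ℝ))*(1+2*Real.log p/L)) := hstrict
          _ = C * ∑ p ∈ HRPP N, (1/(p:ℝ))*(1+2*Real.log p/L) := by
              rw [Finset.mul_sum]
          _ ≤ C * (LL+13) := mul_le_mul_of_nonneg_left hsumW hCpos.le
      have hν1 : (0:ℝ) < (ν:ℝ)+1 := by positivity
      have hstep : ((HRS (ν+1+1) N).card : ℝ) < C*(LL+13)/((ν:ℝ)+1) := by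
        rw [lt_div_iff₀ hν1, mul_comm]
        exact htot
      refine hstep.trans_le (le_of_eq ?_)
      rw [hC, Nat.factorial_succ]
      push_cast
      field_simp
      ring


/-- Hardy–Ramanujan bound for squarefree numbers: there are absolute constants `A₁, A₂`
with `π_{ν+1}(N) < (A₁ N / ln N) (ln ln N + A₂)^ν / ν!` for all `ν ≥ 0`, `N > 3`. -/
theorem piNu_lt : ∃ A₁ A₂ : ℝ, 0 < A₁ ∧ 0 < A₂ ∧ ∀ (ν : ℕ) (N : ℝ), 3 < N →
    (piNu (ν + 1) N : ℝ) <
      A₁ * N / Real.log N * (Real.log (Real.log N) + A₂) ^ ν / (Nat.factorial ν) := by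
  refine ⟨8, 13, by norm_num, by norm_num, ?_⟩
  intro ν N hN
  have h : piNu (ν+1) N = (HRS (ν+1) N).card := rfl
  rw [h]
  exact HR_main ν N hN
end

section
/- There exists a constant B > 0 such that for all N ≥ 3, Σ_{p² ≤ N} 1/(p · ln(N/p)) < (ln ln N + B)/ln N, where the sum is over primes p with p² ≤ N. -/
open Finset

lemma telesc (K : ℕ) {k : ℕ} (hkK : k ≤ K) :
    ∑ j ∈ Finset.Ico k K, (1/(j:ℝ) - 1/(j+1)) = 1/k - 1/K := by
  induction K, hkK using Nat.le_induction with
  | base => simp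
  | succ K hKk ih =>
    rw [Finset.sum_Ico_succ_top hKk, ih]
    push_cast
    ring

lemma prod_pow_dvd (s : Finset ℕ) (hs : ∀ p ∈ s, p.Prime) (e : ℕ → ℕ) (N : ℕ)
    (h : ∀ p ∈ s, p ^ e p ∣ N) : (∏ p ∈ s, p ^ e p) ∣ N := by
  classical
  induction s using Finset.induction with
  | empty => simp
  | insert _ _ ha ih =>
    rename_i a s
    rw [Finset.prod_insert ha]
    refine Nat.Coprime.mul_dvd_of_dvd_of_dvd ?_ (h a (mem_insert_self a s))
      (ih (fun p hp => hs p (mem_insert_of_mem hp)) (fun p hp => h p (mem_insert_of_mem hp)))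
    have hcop : (a : ℕ).Coprime (∏ p ∈ s, p ^ e p) := by
      refine Nat.Coprime.prod_right fun p hp => ?_
      have := Nat.coprime_primes (hs a (mem_insert_self a s)) (hs p (mem_insert_of_mem hp))
      refine Nat.Coprime.pow_right _ (this.mpr ?_)
      rintro rfl; exact ha hp
    exact hcop.pow_left _

lemma pow_div_dvd_factorial {p : ℕ} (hp : p.Prime) (n : ℕ) :
    p ^ (n / p) ∣ Nat.factorial n := by
  rcases Nat.eq_zero_or_pos (n / p) with h0 | h1
  · simp [h0]
  · have hpn : p ≤ n := by
      by_contra hc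
      push_neg at hc
      simp [Nat.div_eq_of_lt hc] at h1
    have hlog : 0 < Nat.log p n := Nat.log_pos hp.one_lt hpn
    rw [hp.pow_dvd_factorial_iff (Nat.lt_succ_self _)]
    have : n / p = n / p ^ 1 := by norm_num
    rw [this]
    refine Finset.single_le_sum (f := fun i => n / p ^ i) (fun i _ => Nat.zero_le _) ?_
    simp only [Finset.mem_Ico]; omega

lemma chebyshev (n : ℕ) :
    ∑ p ∈ (Finset.range (n+1)).filter Nat.Prime, Real.log p ≤ n * Real.log 4 := by
  have h := primorial_le_4_pow n
  have h2 : Real.log (primorial n) ≤ Real.log ((4:ℝ) ^ n) := by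
    apply Real.log_le_log (by exact_mod_cast (primorial_pos n))
    exact_mod_cast h
  rw [primorial] at h2
  rw [Nat.cast_prod] at h2
  rw [Real.log_prod (fun p hp => by
    have := (Finset.mem_filter.mp hp).2.pos
    positivity)] at h2
  calc ∑ p ∈ (Finset.range (n+1)).filter Nat.Prime, Real.log p ≤ Real.log ((4:ℝ)^n) := h2
  _ = n * Real.log 4 := by rw [Real.log_pow]

open Nat in
lemma logfact_lower (n : ℕ) :
    ∑ p ∈ (Finset.range (n+1)).filter Nat.Prime, ((n / p : ℕ) : ℝ) * Real.log p
      ≤ Real.log (Nat.factorial n) := by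
  set s := (Finset.range (n+1)).filter Nat.Prime with hs
  have hdvd : (∏ p ∈ s, p ^ (n / p)) ∣ Nat.factorial n :=
    prod_pow_dvd s (fun p hp => (Finset.mem_filter.mp hp).2) _ _
      (fun p hp => pow_div_dvd_factorial (Finset.mem_filter.mp hp).2 n)
  have hle : ((∏ p ∈ s, p ^ (n / p) : ℕ) : ℝ) ≤ (Nat.factorial n : ℝ) := by
    exact_mod_cast Nat.le_of_dvd (Nat.factorial_pos n) hdvd
  have hpos : (0:ℝ) < (∏ p ∈ s, p ^ (n / p) : ℕ) := by
    have : 0 < ∏ p ∈ s, p ^ (n / p) := by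
      apply Finset.prod_pos
      intro p hp
      exact Nat.pow_pos ((Finset.mem_filter.mp hp).2.pos)
    exact_mod_cast this
  have hlog := Real.log_le_log hpos hle
  rw [Nat.cast_prod] at hlog
  rw [Real.log_prod (fun p hp => by
    have := (Finset.mem_filter.mp hp).2.pos
    have : (0:ℝ) < ((p ^ (n / p) : ℕ) : ℝ) := by exact_mod_cast Nat.pow_pos this
    exact ne_of_gt this)] at hlog
  refine le_trans (le_of_eq ?_) hlog
  apply Finset.sum_congr rfl
  intro p hp
  rw [Nat.cast_pow, Real.log_pow]

lemma mertens1 (n : ℕ) (hn : 1 ≤ n) :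
    ∑ p ∈ (Finset.range (n+1)).filter Nat.Prime, Real.log p / p
      ≤ Real.log n + Real.log 4 := by
  set s := (Finset.range (n+1)).filter Nat.Prime with hs
  have hnpos : (0:ℝ) < n := by exact_mod_cast hn
  rw [← mul_le_mul_iff_right₀ hnpos]
  have key : (n:ℝ) * ∑ p ∈ s, Real.log p / p = ∑ p ∈ s, (n:ℝ) / p * Real.log p := by
    rw [Finset.mul_sum]
    apply Finset.sum_congr rfl
    intro p hp
    ring
  rw [key]
  have step1 : ∑ p ∈ s, (n:ℝ) / p * Real.log p
      ≤ ∑ p ∈ s, (((n / p : ℕ) : ℝ) + 1) * Real.log p := by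
    apply Finset.sum_le_sum
    intro p hp
    have hp' := (Finset.mem_filter.mp hp).2
    have hppos : (0:ℝ) < p := by exact_mod_cast hp'.pos
    apply mul_le_mul_of_nonneg_right _ (Real.log_natCast_nonneg p)
    rw [div_le_iff₀ hppos]
    have h0 := Nat.lt_mul_div_succ n hp'.pos
    have : (n:ℝ) < ((n / p : ℕ) + 1) * p := by
      rw [mul_comm]
      exact_mod_cast h0
    linarith
  have step2 : ∑ p ∈ s, (((n / p : ℕ) : ℝ) + 1) * Real.log p
      = ∑ p ∈ s, ((n / p : ℕ) : ℝ) * Real.log p + ∑ p ∈ s, Real.log p := by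
    rw [← Finset.sum_add_distrib]
    apply Finset.sum_congr rfl
    intro p hp
    ring
  have step3 : Real.log (Nat.factorial n) ≤ (n:ℝ) * Real.log n := by
    have h1 : (Nat.factorial n : ℝ) ≤ ((n ^ n : ℕ) : ℝ) := by
      exact_mod_cast Nat.factorial_le_pow n
    have := Real.log_le_log (by exact_mod_cast Nat.factorial_pos n) h1
    rwa [Nat.cast_pow, Real.log_pow] at this
  calc ∑ p ∈ s, (n:ℝ) / p * Real.log p
      ≤ ∑ p ∈ s, ((n / p : ℕ) : ℝ) * Real.log p + ∑ p ∈ s, Real.log p := by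
        rw [← step2]; exact step1
    _ ≤ (n:ℝ) * Real.log n + (n:ℝ) * Real.log 4 :=
        add_le_add (le_trans (logfact_lower n) step3) (chebyshev n)
    _ = (n:ℝ) * (Real.log n + Real.log 4) := by ring

lemma lognat_mono {a b : ℕ} (h : a ≤ b) : Real.log a ≤ Real.log b := by
  rcases Nat.eq_zero_or_pos a with rfl | ha
  · simpa using Real.log_natCast_nonneg b
  · exact Real.log_le_log (by exact_mod_cast ha) (by exact_mod_cast h)

lemma mertens2 (n : ℕ) (hn : 3 ≤ n) :
    ∑ p ∈ (Finset.range (n+1)).filter Nat.Prime, 1/(p:ℝ)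
      ≤ Real.log (Real.log n) + 7/2 + 2 * Real.log 4 := by
  have hlog4 : (0:ℝ) ≤ Real.log 4 := Real.log_nonneg (by norm_num)
  have hln3 : (1:ℝ) < Real.log 3 := by
    rw [show (1:ℝ) = Real.log (Real.exp 1) by rw [Real.log_exp]]
    apply Real.log_lt_log (Real.exp_pos 1)
    calc Real.exp 1 < 2.7182818286 := Real.exp_one_lt_d9
    _ < 3 := by norm_num
  have hln : (1:ℝ) < Real.log n :=
    lt_of_lt_of_le hln3 (Real.log_le_log (by norm_num) (by exact_mod_cast hn))
  set s := (Finset.range (n+1)).filter Nat.Prime with hs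
  set K := ⌊Real.log n⌋₊ with hK
  have hK1 : 1 ≤ K := Nat.le_floor (by exact_mod_cast hln.le)
  have hK1R : (1:ℝ) ≤ K := by exact_mod_cast hK1
  have hKle : (K:ℝ) ≤ Real.log n := Nat.floor_le (by linarith)
  have hlnK : Real.log n < (K:ℝ) + 1 := Nat.lt_floor_add_one _
  -- split off p = 2
  rw [← Finset.sum_filter_add_sum_filter_not s (fun p => 3 ≤ p) (fun p => 1/(p:ℝ))]
  set s2 := s.filter (fun p => 3 ≤ p) with hs2
  have hsmall : ∑ p ∈ s.filter (fun p => ¬ 3 ≤ p), 1/(p:ℝ) ≤ 1/2 := by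
    have hsub : s.filter (fun p => ¬ 3 ≤ p) ⊆ {2} := by
      intro p hp
      simp only [Finset.mem_filter, hs, Finset.mem_range] at hp
      have h2 := hp.1.2.two_le
      have h3 := hp.2
      simp only [Finset.mem_singleton]
      omega
    calc ∑ p ∈ s.filter (fun p => ¬ 3 ≤ p), 1/(p:ℝ)
        ≤ ∑ p ∈ ({2} : Finset ℕ), 1/(p:ℝ) :=
          Finset.sum_le_sum_of_subset_of_nonneg hsub (fun p _ _ => by positivity)
      _ = 1/2 := by norm_num
  -- facts about primes in s2
  set k : ℕ → ℕ := fun p => ⌊Real.log p⌋₊ with hkdef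
  have hfacts : ∀ p ∈ s2, p.Prime ∧ (0:ℝ) < p ∧ 1 ≤ k p ∧ k p ≤ K ∧
      (k p : ℝ) ≤ Real.log p ∧ Real.log p < (k p : ℝ) + 1 := by
    intro p hp
    simp only [hs2, hs, Finset.mem_filter, Finset.mem_range] at hp
    obtain ⟨⟨hpn, hprime⟩, hp3⟩ := hp
    have hppos : (0:ℝ) < p := by exact_mod_cast hprime.pos
    have hlogp1 : (1:ℝ) ≤ Real.log p :=
      le_trans hln3.le (Real.log_le_log (by norm_num) (by exact_mod_cast hp3))
    have hlogpn : Real.log p ≤ Real.log n := lognat_mono (by omega)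
    refine ⟨hprime, hppos, Nat.le_floor (by exact_mod_cast hlogp1), ?_, ?_, ?_⟩
    · exact Nat.floor_le_floor hlogpn
    · exact Nat.floor_le (by linarith)
    · exact Nat.lt_floor_add_one _
  -- step A : bound each 1/p
  have stepA : ∑ p ∈ s2, 1/(p:ℝ) ≤ ∑ p ∈ s2, (Real.log p / p) * (1 / (k p)) := by
    apply Finset.sum_le_sum
    intro p hp
    obtain ⟨hprime, hppos, hk1, hkK, hkle, _⟩ := hfacts p hp
    have hkposR : (0:ℝ) < k p := by exact_mod_cast hk1
    rw [div_mul_div_comm, mul_one]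
    rw [div_le_div_iff₀ hppos (by positivity)]
    nlinarith
  -- telescoping identity
  have stepB : ∀ p ∈ s2, (1 : ℝ) / (k p) =
      1/K + ∑ j ∈ Finset.Ico (k p) K, (1/(j:ℝ) - 1/(j+1)) := by
    intro p hp
    obtain ⟨_, _, hk1, hkK, _, _⟩ := hfacts p hp
    rw [telesc K hkK]
    ring
  -- nonnegativity of g on j ≥ 1
  have hg : ∀ j : ℕ, 1 ≤ j → (0:ℝ) ≤ 1/(j:ℝ) - 1/((j:ℝ)+1) := by
    intro j hj
    have h0 : (0:ℝ) < j := by exact_mod_cast hj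
    have := one_div_le_one_div_of_le h0 (by linarith : (j:ℝ) ≤ (j:ℝ)+1)
    linarith
  have hfnonneg : ∀ p : ℕ, (0:ℝ) ≤ Real.log p / p := by
    intro p
    apply div_nonneg (Real.log_natCast_nonneg p) (by positivity)
  -- the swap
  have swap : ∑ p ∈ s2, (Real.log p / p) * ∑ j ∈ Finset.Ico (k p) K, (1/(j:ℝ) - 1/(j+1))
      = ∑ j ∈ Finset.Ico 1 K, (1/(j:ℝ) - 1/(j+1)) *
          ∑ p ∈ s2.filter (fun p => k p ≤ j), Real.log p / p := by
    calc ∑ p ∈ s2, (Real.log p / p) * ∑ j ∈ Finset.Ico (k p) K, (1/(j:ℝ) - 1/(j+1))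
        = ∑ p ∈ s2, ∑ j ∈ Finset.Ico 1 K,
            (if k p ≤ j then (Real.log p / p) * (1/(j:ℝ) - 1/(j+1)) else 0) := by
          refine Finset.sum_congr rfl fun p hp => ?_
          obtain ⟨_, _, hk1, _, _, _⟩ := hfacts p hp
          have hIco : Finset.Ico (k p) K = (Finset.Ico 1 K).filter (fun j => k p ≤ j) := by
            ext j
            simp only [Finset.mem_Ico, Finset.mem_filter]
            omega
          rw [Finset.mul_sum, hIco, Finset.sum_filter]
      _ = ∑ j ∈ Finset.Ico 1 K, ∑ p ∈ s2,
            (if k p ≤ j then (Real.log p / p) * (1/(j:ℝ) - 1/(j+1)) else 0) :=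
          Finset.sum_comm
      _ = _ := by
          refine Finset.sum_congr rfl fun j hj => ?_
          rw [← Finset.sum_filter, ← Finset.sum_mul, mul_comm]
  -- bound the inner sums
  have inner : ∀ j ∈ Finset.Ico 1 K,
      ∑ p ∈ s2.filter (fun p => k p ≤ j), Real.log p / p ≤ ((j:ℝ)+1) + Real.log 4 := by
    intro j hj
    set m := ⌊Real.exp ((j:ℝ)+1)⌋₊ with hm
    have hexp1 : (1:ℝ) ≤ Real.exp ((j:ℝ)+1) := Real.one_le_exp (by positivity)
    have hm1 : 1 ≤ m := Nat.le_floor (by exact_mod_cast hexp1)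
    have hsub : s2.filter (fun p => k p ≤ j) ⊆ (Finset.range (m+1)).filter Nat.Prime := by
      intro p hp
      rw [Finset.mem_filter] at hp
      obtain ⟨hps2, hkpj⟩ := hp
      obtain ⟨hprime, hppos, _, _, _, hlt⟩ := hfacts p hps2
      have hpe : (p:ℝ) ≤ Real.exp ((j:ℝ)+1) := by
        have : (p:ℝ) = Real.exp (Real.log p) := (Real.exp_log hppos).symm
        rw [this]
        apply Real.exp_le_exp.mpr
        have : (k p : ℝ) ≤ j := by exact_mod_cast hkpj
        linarith
      have hpm : p ≤ m := Nat.le_floor hpe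
      simp only [Finset.mem_filter, Finset.mem_range]
      exact ⟨by omega, hprime⟩
    calc ∑ p ∈ s2.filter (fun p => k p ≤ j), Real.log p / p
        ≤ ∑ p ∈ (Finset.range (m+1)).filter Nat.Prime, Real.log p / p :=
          Finset.sum_le_sum_of_subset_of_nonneg hsub (fun p _ _ => hfnonneg p)
      _ ≤ Real.log m + Real.log 4 := mertens1 m hm1
      _ ≤ ((j:ℝ)+1) + Real.log 4 := by
          have hmle : (m:ℝ) ≤ Real.exp ((j:ℝ)+1) := Nat.floor_le (by positivity)
          have : Real.log m ≤ Real.log (Real.exp ((j:ℝ)+1)) :=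
            Real.log_le_log (by exact_mod_cast hm1) hmle
          rw [Real.log_exp] at this
          linarith
  -- harmonic sum bound
  have hharm : ∑ j ∈ Finset.Ico 1 K, 1/(j:ℝ) ≤ 1 + Real.log (Real.log n) := by
    have h1 : ∑ j ∈ Finset.Ico 1 K, 1/(j:ℝ) = ((harmonic (K-1) : ℚ) : ℝ) := by
      rw [Finset.sum_Ico_eq_sum_range]
      rw [harmonic]
      push_cast
      refine Finset.sum_congr rfl fun i _ => ?_
      rw [one_div, add_comm]
    rw [h1]
    have h2 := harmonic_le_one_add_log (K-1)
    have h3 : Real.log (K-1 : ℕ) ≤ Real.log (Real.log n) := by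
      rcases Nat.eq_zero_or_pos (K-1) with h0 | hpos
      · rw [h0]
        simpa using Real.log_nonneg hln.le
      · apply Real.log_le_log (by exact_mod_cast hpos)
        have : ((K-1 : ℕ):ℝ) ≤ (K:ℝ) := by
          have : (K:ℕ) - 1 ≤ K := Nat.sub_le K 1
          exact_mod_cast this
        linarith
    linarith
  -- part 1 bound
  have part1 : ∑ p ∈ s2, (Real.log p / p) * (1/(K:ℝ)) ≤ 2 + Real.log 4 := by
    have hsub2 : ∑ p ∈ s2, Real.log p / p ≤ ∑ p ∈ s, Real.log p / p :=
      Finset.sum_le_sum_of_subset_of_nonneg (Finset.filter_subset _ _) (fun p _ _ => hfnonneg p)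
    have hm1 := mertens1 n (by omega)
    have hKpos : (0:ℝ) < K := by linarith
    rw [← Finset.sum_mul]
    calc (∑ p ∈ s2, Real.log p / p) * (1/(K:ℝ)) ≤ (Real.log n + Real.log 4) * (1/(K:ℝ)) := by
          apply mul_le_mul_of_nonneg_right _ (by positivity)
          exact le_trans hsub2 hm1
      _ ≤ 2 + Real.log 4 := by
          rw [mul_one_div, div_le_iff₀ hKpos]
          nlinarith
  -- assemble main bound
  have main : ∑ p ∈ s2, 1/(p:ℝ) ≤ Real.log (Real.log n) + 3 + 2 * Real.log 4 := by
    have htel1 : ∑ j ∈ Finset.Ico 1 K, (1/(j:ℝ) - 1/(j+1)) = 1 - 1/(K:ℝ) := by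
      rw [telesc K hK1]; norm_num
    calc ∑ p ∈ s2, 1/(p:ℝ) ≤ ∑ p ∈ s2, (Real.log p / p) * (1 / (k p)) := stepA
      _ = ∑ p ∈ s2, ((Real.log p / p) * (1/(K:ℝ))
            + (Real.log p / p) * ∑ j ∈ Finset.Ico (k p) K, (1/(j:ℝ) - 1/(j+1))) := by
          refine Finset.sum_congr rfl fun p hp => ?_
          rw [stepB p hp]; ring
      _ = ∑ p ∈ s2, (Real.log p / p) * (1/(K:ℝ))
            + ∑ j ∈ Finset.Ico 1 K, (1/(j:ℝ) - 1/(j+1)) *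
                ∑ p ∈ s2.filter (fun p => k p ≤ j), Real.log p / p := by
          rw [Finset.sum_add_distrib, swap]
      _ ≤ (2 + Real.log 4)
            + ∑ j ∈ Finset.Ico 1 K, (1/(j:ℝ) - 1/(j+1)) * (((j:ℝ)+1) + Real.log 4) := by
          apply add_le_add part1
          apply Finset.sum_le_sum
          intro j hj
          have hj1 : 1 ≤ j := (Finset.mem_Ico.mp hj).1
          exact mul_le_mul_of_nonneg_left (inner j hj) (hg j hj1)
      _ = (2 + Real.log 4)
            + (∑ j ∈ Finset.Ico 1 K, 1/(j:ℝ)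
               + Real.log 4 * ∑ j ∈ Finset.Ico 1 K, (1/(j:ℝ) - 1/(j+1))) := by
          congr 1
          rw [Finset.mul_sum, ← Finset.sum_add_distrib]
          refine Finset.sum_congr rfl fun j hj => ?_
          have hj1 : 1 ≤ j := (Finset.mem_Ico.mp hj).1
          have hjne : (j:ℝ) ≠ 0 := by
            have : (0:ℝ) < j := by exact_mod_cast hj1
            linarith
          have hjne1 : (j:ℝ) + 1 ≠ 0 := by positivity
          field_simp
          ring
      _ ≤ (2 + Real.log 4) + ((1 + Real.log (Real.log n)) + Real.log 4 * 1) := by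
          apply add_le_add_right
          apply add_le_add hharm
          apply mul_le_mul_of_nonneg_left _ hlog4
          rw [htel1]
          have : (0:ℝ) < 1/(K:ℝ) := by positivity
          linarith
      _ = Real.log (Real.log n) + 3 + 2 * Real.log 4 := by ring
  linarith

/-- There is a constant `B > 0` with
`Σ_{p² ≤ N} 1/(p ln(N/p)) < (ln ln N + B)/ln N` for all `N ≥ 3`. -/
theorem sum_one_div_p_log_lt : ∃ B : ℝ, 0 < B ∧ ∀ N : ℝ, 3 ≤ N →
    ∑ p ∈ (Finset.range (⌊N⌋₊ + 1)).filter (fun p : ℕ => p.Prime ∧ ((p : ℝ)) ^ 2 ≤ N),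
        1 / ((p : ℝ) * Real.log (N / p)) <
      (Real.log (Real.log N) + B) / Real.log N := by
  have hlog3 : (0:ℝ) < Real.log 3 := Real.log_pos (by norm_num)
  have hlog4 : (0:ℝ) < Real.log 4 := Real.log_pos (by norm_num)
  refine ⟨11/2 + 2*Real.log 3 + 4*Real.log 4, by positivity, ?_⟩
  intro N hN
  have hNpos : (0:ℝ) < N := by linarith
  have hln3 : (1:ℝ) < Real.log 3 := by
    rw [show (1:ℝ) = Real.log (Real.exp 1) by rw [Real.log_exp]]
    apply Real.log_lt_log (Real.exp_pos 1)
    calc Real.exp 1 < 2.7182818286 := Real.exp_one_lt_d9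
    _ < 3 := by norm_num
  have hlnN : (1:ℝ) < Real.log N := lt_of_lt_of_le hln3 (Real.log_le_log (by norm_num) hN)
  have hlnNpos : (0:ℝ) < Real.log N := by linarith
  set A := (Finset.range (⌊N⌋₊ + 1)).filter (fun p : ℕ => p.Prime ∧ ((p : ℝ)) ^ 2 ≤ N) with hA
  set m := ⌊Real.sqrt N⌋₊ with hm
  set n' := max m 3 with hn'
  have hn'3 : 3 ≤ n' := le_max_right _ _
  have hsqrt1 : (1:ℝ) ≤ Real.sqrt N := by
    rw [show (1:ℝ) = Real.sqrt 1 by simp]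
    exact Real.sqrt_le_sqrt (by linarith)
  -- n' ≤ N as reals
  have hn'N : (n' : ℝ) ≤ N := by
    rcases max_cases m 3 with ⟨h1, _⟩ | ⟨h1, _⟩ <;> rw [hn', h1]
    · calc (m:ℝ) ≤ Real.sqrt N := Nat.floor_le (by linarith)
      _ ≤ N := by
          nlinarith [Real.sq_sqrt hNpos.le, Real.sqrt_nonneg N]
    · exact_mod_cast hN
  have hlnn'pos : (0:ℝ) < Real.log n' := by
    calc (0:ℝ) < Real.log 3 := hlog3
    _ ≤ Real.log n' := lognat_mono hn'3
  have hlnln : Real.log (Real.log n') ≤ Real.log (Real.log N) := by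
    apply Real.log_le_log hlnn'pos
    rcases Nat.eq_zero_or_pos n' with h0 | hpos
    · omega
    · exact Real.log_le_log (by exact_mod_cast hpos) hn'N
  have hlnn'le : Real.log n' ≤ Real.log N / 2 + Real.log 3 := by
    rcases max_cases m 3 with ⟨h1, _⟩ | ⟨h1, _⟩ <;> rw [hn', h1]
    · have hmsqrt : (m:ℝ) ≤ Real.sqrt N := Nat.floor_le (by linarith)
      have hm1 : 1 ≤ m := Nat.le_floor (by exact_mod_cast hsqrt1)
      have := Real.log_le_log (by exact_mod_cast hm1) hmsqrt
      rw [Real.log_sqrt hNpos.le] at this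
      linarith
    · linarith
  -- A is contained in primes up to n'
  have hsub : A ⊆ (Finset.range (n'+1)).filter Nat.Prime := by
    intro p hp
    rw [hA, Finset.mem_filter] at hp
    obtain ⟨_, hprime, hp2⟩ := hp
    have hple : (p:ℝ) ≤ Real.sqrt N := Real.le_sqrt' (by exact_mod_cast hprime.pos) |>.mpr hp2
    have hpm : p ≤ m := Nat.le_floor hple
    simp only [Finset.mem_filter, Finset.mem_range]
    exact ⟨by omega, hprime⟩
  have hfnonneg : ∀ p : ℕ, (0:ℝ) ≤ Real.log p / p := fun p =>
    div_nonneg (Real.log_natCast_nonneg p) (by positivity)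
  -- sum bounds from mertens
  have hsum1 : ∑ p ∈ A, 1/(p:ℝ) ≤ Real.log (Real.log n') + 7/2 + 2*Real.log 4 :=
    le_trans (Finset.sum_le_sum_of_subset_of_nonneg hsub (fun p _ _ => by positivity))
      (mertens2 n' hn'3)
  have hsum2 : ∑ p ∈ A, Real.log p / p ≤ Real.log N / 2 + Real.log 3 + Real.log 4 := by
    refine le_trans (Finset.sum_le_sum_of_subset_of_nonneg hsub (fun p _ _ => hfnonneg p)) ?_
    refine le_trans (mertens1 n' (by omega)) ?_
    linarith
  -- per-term bound
  have key : ∀ p ∈ A, 1/((p:ℝ) * Real.log (N/p)) ≤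
      (1/Real.log N) * (1/(p:ℝ)) + (2/(Real.log N)^2) * (Real.log p / p) := by
    intro p hp
    rw [hA, Finset.mem_filter] at hp
    obtain ⟨_, hprime, hp2⟩ := hp
    have hppos : (0:ℝ) < p := by exact_mod_cast hprime.pos
    have hlogp : (0:ℝ) ≤ Real.log p := Real.log_natCast_nonneg p
    have hhalf : Real.log p ≤ Real.log N / 2 := by
      have h1 : Real.log ((p:ℝ)^2) ≤ Real.log N := Real.log_le_log (by positivity) hp2
      rw [Real.log_pow] at h1
      push_cast at h1
      linarith
    have hdiv : Real.log (N/p) = Real.log N - Real.log p :=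
      Real.log_div (ne_of_gt hNpos) (ne_of_gt hppos)
    rw [hdiv]
    have hpos2 : (0:ℝ) < Real.log N - Real.log p := by linarith
    have e : (1/Real.log N) * (1/(p:ℝ)) + (2/(Real.log N)^2) * (Real.log p / p)
        = (Real.log N + 2*Real.log p)/((p:ℝ)*(Real.log N)^2) := by
      field_simp
    rw [e, div_le_div_iff₀ (by positivity) (by positivity)]
    nlinarith [mul_nonneg (mul_nonneg hppos.le hlogp)
      (show (0:ℝ) ≤ Real.log N - 2*Real.log p by linarith)]
  -- combine
  have main : ∑ p ∈ A, 1/((p:ℝ) * Real.log (N/p)) ≤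
      (1/Real.log N) * (Real.log (Real.log n') + 7/2 + 2*Real.log 4)
        + (2/(Real.log N)^2) * (Real.log N / 2 + Real.log 3 + Real.log 4) := by
    calc ∑ p ∈ A, 1/((p:ℝ) * Real.log (N/p))
        ≤ ∑ p ∈ A, ((1/Real.log N) * (1/(p:ℝ)) + (2/(Real.log N)^2) * (Real.log p / p)) :=
          Finset.sum_le_sum key
      _ = (1/Real.log N) * ∑ p ∈ A, 1/(p:ℝ)
            + (2/(Real.log N)^2) * ∑ p ∈ A, Real.log p / p := by
          rw [Finset.sum_add_distrib, Finset.mul_sum, Finset.mul_sum]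
      _ ≤ _ := by
          apply add_le_add
          · exact mul_le_mul_of_nonneg_left hsum1 (by positivity)
          · exact mul_le_mul_of_nonneg_left hsum2 (by positivity)
  refine lt_of_le_of_lt main ?_
  rw [lt_div_iff₀ hlnNpos]
  have hLne : Real.log N ≠ 0 := ne_of_gt hlnNpos
  have expand : ((1/Real.log N) * (Real.log (Real.log n') + 7/2 + 2*Real.log 4)
        + (2/(Real.log N)^2) * (Real.log N / 2 + Real.log 3 + Real.log 4)) * Real.log N
      = Real.log (Real.log n') + 7/2 + 2*Real.log 4 + 1
        + 2*(Real.log 3 + Real.log 4)/Real.log N := by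
    field_simp
    ring
  rw [expand]
  have hdivle : 2*(Real.log 3 + Real.log 4)/Real.log N ≤ 2*(Real.log 3 + Real.log 4) :=
    div_le_self (by positivity) hlnN.le
  linarith
end
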